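/- arXiv:2209.01531 — 3 statements merged into one kernel-verified Lean document; each statement's English description precedes it below -/
import Mathlib

section
/- If A, B, C are Hermitian operators on a finite-dimensional Hilbert space that pairwise anticommute and satisfy A² = B² = C² = I, then for any density matrix ρ, (Tr(ρA))² + (Tr(ρB))² + (Tr(ρC))² ≤ 1. -/
open Matrix Complex
open scoped ComplexOrder

noncomputable section

/-- Cauchy–Schwarz for the Frobenius inner product. -/
lemma trace_CS {n : ℕ} (S N : Matrix (Fin n) (Fin n) ℂ) :
    ‖(Sᴴ * N).trace‖ ^ 2 ≤ ((Sᴴ * S).trace).re * ((Nᴴ * N).trace).re := by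
  let x : EuclideanSpace ℂ (Fin n × Fin n) := WithLp.toLp 2 (fun p : Fin n × Fin n => S p.2 p.1)
  let y : EuclideanSpace ℂ (Fin n × Fin n) := WithLp.toLp 2 (fun p : Fin n × Fin n => N p.2 p.1)
  have hinner : inner ℂ x y = (Sᴴ * N).trace := by
    simp only [PiLp.inner_apply, PiLp.toLp_apply, Matrix.trace, Matrix.diag, Matrix.mul_apply, Matrix.conjTranspose_apply,
      x, y, RCLike.inner_apply]
    rw [← Finset.sum_product', Finset.univ_product_univ]
    exact Finset.sum_congr rfl fun p _ => mul_comm _ _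
  have hx : (‖x‖ : ℝ) ^ 2 = ((Sᴴ * S).trace).re := by
    rw [← @inner_self_eq_norm_sq ℂ]
    have : inner ℂ x x = (Sᴴ * S).trace := by
      simp only [PiLp.inner_apply, PiLp.toLp_apply, Matrix.trace, Matrix.diag, Matrix.mul_apply, Matrix.conjTranspose_apply,
        x, RCLike.inner_apply]
      rw [← Finset.sum_product', Finset.univ_product_univ]
      exact Finset.sum_congr rfl fun p _ => mul_comm _ _
    rw [← this]
    simp
  have hy : (‖y‖ : ℝ) ^ 2 = ((Nᴴ * N).trace).re := by
    rw [← @inner_self_eq_norm_sq ℂ]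
    have : inner ℂ y y = (Nᴴ * N).trace := by
      simp only [PiLp.inner_apply, PiLp.toLp_apply, Matrix.trace, Matrix.diag, Matrix.mul_apply, Matrix.conjTranspose_apply,
        y, RCLike.inner_apply]
      rw [← Finset.sum_product', Finset.univ_product_univ]
      exact Finset.sum_congr rfl fun p _ => mul_comm _ _
    rw [← this]
    simp
  have := norm_inner_le_norm (𝕜 := ℂ) x y
  rw [hinner] at this
  calc ‖(Sᴴ * N).trace‖ ^ 2 ≤ (‖x‖ * ‖y‖) ^ 2 := by
        apply pow_le_pow_left₀ (by positivity) this
    _ = ((Sᴴ * S).trace).re * ((Nᴴ * N).trace).re := by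
        rw [mul_pow, hx, hy]

/-- For pairwise anticommuting Hermitian involutions `A`, `B`, `C` and any density
matrix `ρ`, the expectation values satisfy `⟨A⟩² + ⟨B⟩² + ⟨C⟩² ≤ 1`. -/
theorem stmt2 {n : ℕ} (A B C ρ : Matrix (Fin n) (Fin n) ℂ)
    (hA : A.IsHermitian) (hB : B.IsHermitian) (hC : C.IsHermitian)
    (hA2 : A * A = 1) (hB2 : B * B = 1) (hC2 : C * C = 1)
    (hAB : A * B + B * A = 0) (hAC : A * C + C * A = 0) (hBC : B * C + C * B = 0)
    (hρ : ρ.PosSemidef) (hTr : ρ.trace = 1) :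
    ‖(ρ * A).trace‖ ^ 2 + ‖(ρ * B).trace‖ ^ 2 +
      ‖(ρ * C).trace‖ ^ 2 ≤ 1 := by
  -- reality of expectation values
  have hreal : ∀ (M : Matrix (Fin n) (Fin n) ℂ), M.IsHermitian →
      ((ρ * M).trace) = (((ρ * M).trace.re : ℝ) : ℂ) := by
    intro M hM
    have h1 : star ((ρ * M).trace) = (ρ * M).trace := by
      rw [← Matrix.trace_conjTranspose, Matrix.conjTranspose_mul, hM.eq, hρ.1.eq,
        Matrix.trace_mul_comm]
    exact (Complex.conj_eq_iff_re.mp h1).symm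
  set α := ((ρ * A).trace).re with hα
  set β := ((ρ * B).trace).re with hβ
  set γ := ((ρ * C).trace).re with hγ
  have haA := hreal A hA
  have haB := hreal B hB
  have haC := hreal C hC
  have habsA : ‖(ρ * A).trace‖ ^ 2 = α ^ 2 := by
    rw [haA, Complex.norm_real, Real.norm_eq_abs, _root_.sq_abs]
  have habsB : ‖(ρ * B).trace‖ ^ 2 = β ^ 2 := by
    rw [haB, Complex.norm_real, Real.norm_eq_abs, _root_.sq_abs]
  have habsC : ‖(ρ * C).trace‖ ^ 2 = γ ^ 2 := by
    rw [haC, Complex.norm_real, Real.norm_eq_abs, _root_.sq_abs]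
  rw [habsA, habsB, habsC]
  set s : ℝ := α ^ 2 + β ^ 2 + γ ^ 2 with hs
  have hs0 : 0 ≤ s := by positivity
  set M : Matrix (Fin n) (Fin n) ℂ := (α : ℂ) • A + (β : ℂ) • B + (γ : ℂ) • C with hM
  have hMherm : M.IsHermitian := by
    simp only [hM, Matrix.IsHermitian, Matrix.conjTranspose_add, Matrix.conjTranspose_smul,
      hA.eq, hB.eq, hC.eq, Complex.star_def, Complex.conj_ofReal]
  have hM2 : M * M = (s : ℂ) • 1 := by
    rw [hM]
    have expand : ((α : ℂ) • A + (β : ℂ) • B + (γ : ℂ) • C) *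
        ((α : ℂ) • A + (β : ℂ) • B + (γ : ℂ) • C) =
        ((α : ℂ)^2) • (A * A) + ((β : ℂ)^2) • (B * B) + ((γ : ℂ)^2) • (C * C)
        + ((α : ℂ) * (β : ℂ)) • (A * B + B * A)
        + ((α : ℂ) * (γ : ℂ)) • (A * C + C * A)
        + ((β : ℂ) * (γ : ℂ)) • (B * C + C * B) := by
      simp only [Matrix.add_mul, Matrix.mul_add, Matrix.smul_mul, Matrix.mul_smul, smul_add,
        smul_smul, pow_two]
      abel_nf
      module
    rw [expand, hA2, hB2, hC2, hAB, hAC, hBC]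
    simp only [smul_zero, add_zero, ← add_smul]
    norm_cast
  have hTrM : (ρ * M).trace = (s : ℂ) := by
    rw [hM]
    simp only [Matrix.mul_add, Matrix.mul_smul, Matrix.trace_add, Matrix.trace_smul]
    rw [haA, haB, haC]
    simp only [smul_eq_mul, hs]
    push_cast
    ring
  -- Cauchy-Schwarz with S = sqrt ρ, N = S * M
  obtain ⟨S, hSherm, hSS⟩ : ∃ S : Matrix (Fin n) (Fin n) ℂ, Sᴴ = S ∧ S * S = ρ := by
    open scoped MatrixOrder in
    exact ⟨CFC.sqrt ρ, (CFC.sqrt_nonneg ρ).posSemidef.1, CFC.sqrt_mul_sqrt_self ρ hρ.nonneg⟩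
  have key := trace_CS S (S * M)
  rw [hSherm] at key
  have e1 : S * (S * M) = ρ * M := by rw [← Matrix.mul_assoc, hSS]
  have e2 : (S * M)ᴴ * (S * M) = M * (ρ * M) := by
    rw [Matrix.conjTranspose_mul, hSherm, hMherm.eq, Matrix.mul_assoc, ← Matrix.mul_assoc S,
      hSS]
  rw [e1, e2, hSS] at key
  have e3 : (M * (ρ * M)).trace = (s : ℂ) := by
    rw [Matrix.trace_mul_comm, Matrix.mul_assoc, hM2, Matrix.mul_smul, Matrix.mul_one,
      Matrix.trace_smul, hTr, smul_eq_mul, mul_one]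
  rw [e3, hTrM, hTr] at key
  simp only [Complex.norm_real, Real.norm_eq_abs, Complex.one_re, Complex.ofReal_re, one_mul] at key
  rw [_root_.abs_of_nonneg hs0] at key
  -- key : s ^ 2 ≤ s
  nlinarith [key, hs0]
end
end

section
/- Let ρ be a density matrix on H_A ⊗ H_B that is separable, i.e., ρ = Σᵢ pᵢ ρ_Aⁱ ⊗ ρ_Bⁱ with pᵢ ≥ 0, Σpᵢ = 1 and ρ_Aⁱ, ρ_Bⁱ density matrices. Suppose X_A, Y_A, Z_A are pairwise anticommuting Hermitian involutions on H_A and X_B, Y_B, Z_B are pairwise anticommuting Hermitian involutions on H_B. Then |Tr(ρ (X_A⊗X_B))| + |Tr(ρ (Y_A⊗Y_B))| + |Tr(ρ (Z_A⊗Z_B))| ≤ 1. -/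
open Matrix Complex Kronecker
open scoped ComplexOrder
noncomputable section

lemma psd_smul {d : ℕ} {M : Matrix (Fin d) (Fin d) ℂ} (h : M.PosSemidef) {r : ℝ} (hr : 0 ≤ r) :
    (((r:ℂ)) • M).PosSemidef := by
  refine posSemidef_iff_dotProduct_mulVec.mpr ⟨?_, ?_⟩
  · unfold Matrix.IsHermitian
    rw [conjTranspose_smul, h.1.eq]
    norm_num
  · intro x
    rw [smul_mulVec, dotProduct_smul]
    have := h.dotProduct_mulVec_nonneg x
    exact smul_nonneg (by exact_mod_cast Complex.zero_le_real.mpr hr) this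

lemma psd_trace_nonneg {d : ℕ} {M : Matrix (Fin d) (Fin d) ℂ} (h : M.PosSemidef) :
    0 ≤ M.trace := by
  rw [Matrix.trace]
  apply Finset.sum_nonneg
  intro i _
  have := h.dotProduct_mulVec_nonneg (Pi.single i 1)
  simpa [Matrix.mulVec_single, dotProduct, Pi.single_apply, Finset.sum_ite_eq, diag] using this

lemma trace_mul_psd_nonneg {d : ℕ} {σ N : Matrix (Fin d) (Fin d) ℂ}
    (hσ : σ.PosSemidef) (hN : N.PosSemidef) : 0 ≤ (σ * N).trace := by
  obtain ⟨B, rfl⟩ : ∃ B : Matrix (Fin d) (Fin d) ℂ, σ = Bᴴ * B := by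
    open scoped MatrixOrder Matrix.Norms.L2Operator in
      exact CStarAlgebra.nonneg_iff_eq_star_mul_self.mp hσ.nonneg
  rw [Matrix.mul_assoc, Matrix.trace_mul_comm]
  exact psd_trace_nonneg ((hN.mul_mul_conjTranspose_same B))

lemma trace_real {d : ℕ} {σ A : Matrix (Fin d) (Fin d) ℂ} (hσ : σ.PosSemidef)
    (hA : A.IsHermitian) : ((σ * A).trace.re : ℂ) = (σ * A).trace := by
  have h1 : (σ * A).trace = star ((σ * A).trace) := by
    rw [← Matrix.trace_conjTranspose, conjTranspose_mul, hA.eq, hσ.1.eq, Matrix.trace_mul_comm]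
  rw [Complex.ext_iff]
  constructor
  · simp
  · have := congrArg Complex.im h1
    simp at this ⊢
    linarith

lemma anticomm_neg {d : ℕ} {A B : Matrix (Fin d) (Fin d) ℂ} (h : A * B + B * A = 0) :
    B * A = -(A * B) := eq_neg_of_add_eq_zero_right h

lemma single_bound {d : ℕ} (σ A B C : Matrix (Fin d) (Fin d) ℂ)
    (hσ : σ.PosSemidef) (hσ1 : σ.trace = 1)
    (hA : A.IsHermitian) (hB : B.IsHermitian) (hC : C.IsHermitian)
    (hA2 : A * A = 1) (hB2 : B * B = 1) (hC2 : C * C = 1)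
    (hAB : A * B + B * A = 0) (hAC : A * C + C * A = 0) (hBC : B * C + C * B = 0) :
    ((σ * A).trace.re)^2 + ((σ * B).trace.re)^2 + ((σ * C).trace.re)^2 ≤ 1 := by
  set a := (σ * A).trace.re with ha
  set b := (σ * B).trace.re with hb
  set c := (σ * C).trace.re with hc
  set s := a^2 + b^2 + c^2 with hs
  have hs0 : 0 ≤ s := by positivity
  rcases eq_or_lt_of_le hs0 with h0 | hpos
  · nlinarith
  set M : Matrix (Fin d) (Fin d) ℂ := (a:ℂ) • A + (b:ℂ) • B + (c:ℂ) • C with hM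
  have hMH : M.IsHermitian := by
    unfold Matrix.IsHermitian
    simp [hM, conjTranspose_add, conjTranspose_smul, hA.eq, hB.eq, hC.eq]
  have hMM : M * M = ((s:ℝ):ℂ) • (1 : Matrix (Fin d) (Fin d) ℂ) := by
    simp only [hM, add_mul, mul_add, smul_mul_assoc, mul_smul_comm, smul_smul,
      hA2, hB2, hC2, anticomm_neg hAB, anticomm_neg hAC, anticomm_neg hBC, smul_neg]
    push_cast [hs]
    module
  have htr : (σ * M).trace = ((s:ℝ):ℂ) := by
    simp only [hM, mul_add, Matrix.mul_smul, trace_add, trace_smul, smul_eq_mul]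
    rw [← trace_real hσ hA, ← trace_real hσ hB, ← trace_real hσ hC]
    push_cast [hs]
    ring
  set t := Real.sqrt s with ht
  have ht0 : 0 < t := Real.sqrt_pos.mpr hpos
  have ht2 : t * t = s := Real.mul_self_sqrt hs0
  set N : Matrix (Fin d) (Fin d) ℂ := (t:ℂ) • 1 - M with hN
  have hNH : N.IsHermitian := by
    unfold Matrix.IsHermitian
    simp [hN, conjTranspose_sub, conjTranspose_smul, hMH.eq]
  have hNN : N * N = ((2*t : ℝ):ℂ) • N := by
    simp only [hN, sub_mul, mul_sub, smul_mul_assoc, mul_smul_comm, smul_smul, one_mul, mul_one,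
      hMM, smul_sub]
    have hsC : ((s:ℝ):ℂ) = (t:ℂ)*(t:ℂ) := by exact_mod_cast ht2.symm
    rw [hsC]
    push_cast
    module
  have hNpsd : N.PosSemidef := by
    have h1 : ((2*t:ℝ)⁻¹ : ℂ) • (Nᴴ * N) = N := by
      rw [hNH.eq, hNN, smul_smul,
        inv_mul_cancel₀ (Complex.ofReal_ne_zero.mpr (by positivity : (2*t:ℝ) ≠ 0)), one_smul]
    rw [← h1, ← Complex.ofReal_inv]
    exact psd_smul (posSemidef_conjTranspose_mul_self N) (inv_nonneg.mpr (by linarith))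
  have hfin : 0 ≤ (σ * N).trace := trace_mul_psd_nonneg hσ hNpsd
  have : (σ * N).trace = ((t - s : ℝ) : ℂ) := by
    simp only [hN, mul_sub, Matrix.mul_smul, trace_sub, trace_smul, mul_one, hσ1, htr,
      smul_eq_mul]
    push_cast
    ring
  rw [this] at hfin
  have hts : s ≤ t := by
    have h2 : (0:ℝ) ≤ t - s := Complex.zero_le_real.mp hfin
    linarith
  nlinarith [ht2, ht0]

lemma cs3 (a b c x y z : ℝ) (h1 : a^2+b^2+c^2 ≤ 1) (h2 : x^2+y^2+z^2 ≤ 1) :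
    |a*x| + |b*y| + |c*z| ≤ 1 := by
  rw [abs_mul, abs_mul, abs_mul]
  nlinarith [_root_.sq_abs a, _root_.sq_abs b, _root_.sq_abs c, _root_.sq_abs x, _root_.sq_abs y, _root_.sq_abs z,
    abs_nonneg a, abs_nonneg b, abs_nonneg c, abs_nonneg x, abs_nonneg y, abs_nonneg z,
    sq_nonneg (|a| * |y| - |b| * |x|), sq_nonneg (|a| * |z| - |c| * |x|), sq_nonneg (|b| * |z| - |c| * |y|),
    sq_nonneg (|a| * |x| + |b| * |y| + |c| * |z| - 1),
    mul_nonneg (mul_nonneg (abs_nonneg a) (abs_nonneg x)) (mul_nonneg (abs_nonneg b) (abs_nonneg y)),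
    mul_nonneg (mul_nonneg (abs_nonneg a) (abs_nonneg x)) (mul_nonneg (abs_nonneg c) (abs_nonneg z)),
    mul_nonneg (mul_nonneg (abs_nonneg b) (abs_nonneg y)) (mul_nonneg (abs_nonneg c) (abs_nonneg z))]

/-- For a separable state `ρ = Σᵢ pᵢ ρ_Aⁱ ⊗ ρ_Bⁱ` and pairwise anticommuting Hermitian
involutions `X_A, Y_A, Z_A` on `H_A` and `X_B, Y_B, Z_B` on `H_B`, one has
`|⟨X_A⊗X_B⟩| + |⟨Y_A⊗Y_B⟩| + |⟨Z_A⊗Z_B⟩| ≤ 1`. -/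
theorem stmt3 {m n K : ℕ}
    (p : Fin K → ℝ) (hp : ∀ i, 0 ≤ p i) (hp1 : ∑ i, p i = 1)
    (ρA : Fin K → Matrix (Fin m) (Fin m) ℂ) (ρB : Fin K → Matrix (Fin n) (Fin n) ℂ)
    (hρA : ∀ i, (ρA i).PosSemidef ∧ (ρA i).trace = 1)
    (hρB : ∀ i, (ρB i).PosSemidef ∧ (ρB i).trace = 1)
    (XA YA ZA : Matrix (Fin m) (Fin m) ℂ) (XB YB ZB : Matrix (Fin n) (Fin n) ℂ)
    (hXA : XA.IsHermitian) (hYA : YA.IsHermitian) (hZA : ZA.IsHermitian)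
    (hXB : XB.IsHermitian) (hYB : YB.IsHermitian) (hZB : ZB.IsHermitian)
    (hXA2 : XA * XA = 1) (hYA2 : YA * YA = 1) (hZA2 : ZA * ZA = 1)
    (hXB2 : XB * XB = 1) (hYB2 : YB * YB = 1) (hZB2 : ZB * ZB = 1)
    (hXYA : XA * YA + YA * XA = 0) (hXZA : XA * ZA + ZA * XA = 0)
    (hYZA : YA * ZA + ZA * YA = 0)
    (hXYB : XB * YB + YB * XB = 0) (hXZB : XB * ZB + ZB * XB = 0)
    (hYZB : YB * ZB + ZB * YB = 0)
    (ρ : Matrix (Fin m × Fin n) (Fin m × Fin n) ℂ)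
    (hρ : ρ = ∑ i, ((p i : ℝ) : ℂ) • (ρA i ⊗ₖ ρB i)) :
    ‖(ρ * (XA ⊗ₖ XB)).trace‖ + ‖(ρ * (YA ⊗ₖ YB)).trace‖ +
      ‖(ρ * (ZA ⊗ₖ ZB)).trace‖ ≤ 1 := by
  have key : ∀ (SA : Matrix (Fin m) (Fin m) ℂ) (SB : Matrix (Fin n) (Fin n) ℂ),
      (ρ * (SA ⊗ₖ SB)).trace = ∑ i, ((p i : ℝ) : ℂ) * ((ρA i * SA).trace * (ρB i * SB).trace) := by
    intro SA SB
    rw [hρ, Finset.sum_mul, trace_sum]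
    refine Finset.sum_congr rfl fun i _ => ?_
    rw [smul_mul_assoc, trace_smul, ← mul_kronecker_mul, trace_kronecker, smul_eq_mul]
  set a : Fin K → ℝ := fun i => ((ρA i * XA).trace.re) with ha
  set b : Fin K → ℝ := fun i => ((ρA i * YA).trace.re) with hb
  set c : Fin K → ℝ := fun i => ((ρA i * ZA).trace.re) with hc
  set x : Fin K → ℝ := fun i => ((ρB i * XB).trace.re) with hx
  set y : Fin K → ℝ := fun i => ((ρB i * YB).trace.re) with hy
  set z : Fin K → ℝ := fun i => ((ρB i * ZB).trace.re) with hz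
  have hAbound : ∀ i, (a i)^2 + (b i)^2 + (c i)^2 ≤ 1 := fun i =>
    single_bound (ρA i) XA YA ZA (hρA i).1 (hρA i).2 hXA hYA hZA hXA2 hYA2 hZA2 hXYA hXZA hYZA
  have hBbound : ∀ i, (x i)^2 + (y i)^2 + (z i)^2 ≤ 1 := fun i =>
    single_bound (ρB i) XB YB ZB (hρB i).1 (hρB i).2 hXB hYB hZB hXB2 hYB2 hZB2 hXYB hXZB hYZB
  have hcs : ∀ i, |a i * x i| + |b i * y i| + |c i * z i| ≤ 1 := fun i =>
    cs3 _ _ _ _ _ _ (hAbound i) (hBbound i)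
  have htrX : (ρ * (XA ⊗ₖ XB)).trace = ((∑ i, p i * (a i * x i) : ℝ) : ℂ) := by
    rw [key]
    push_cast
    refine Finset.sum_congr rfl fun i _ => ?_
    rw [trace_real (hρA i).1 hXA, trace_real (hρB i).1 hXB]
  have htrY : (ρ * (YA ⊗ₖ YB)).trace = ((∑ i, p i * (b i * y i) : ℝ) : ℂ) := by
    rw [key]
    push_cast
    refine Finset.sum_congr rfl fun i _ => ?_
    rw [trace_real (hρA i).1 hYA, trace_real (hρB i).1 hYB]
  have htrZ : (ρ * (ZA ⊗ₖ ZB)).trace = ((∑ i, p i * (c i * z i) : ℝ) : ℂ) := by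
    rw [key]
    push_cast
    refine Finset.sum_congr rfl fun i _ => ?_
    rw [trace_real (hρA i).1 hZA, trace_real (hρB i).1 hZB]
  rw [htrX, htrY, htrZ, Complex.norm_real, Complex.norm_real, Complex.norm_real,
    Real.norm_eq_abs, Real.norm_eq_abs, Real.norm_eq_abs]
  have bnd : ∀ (f : Fin K → ℝ), |∑ i, p i * f i| ≤ ∑ i, p i * |f i| := by
    intro f
    refine (Finset.abs_sum_le_sum_abs _ _).trans ?_
    refine Finset.sum_le_sum fun i _ => ?_
    rw [abs_mul, _root_.abs_of_nonneg (hp i)]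
  calc |∑ i, p i * (a i * x i)| + |∑ i, p i * (b i * y i)| + |∑ i, p i * (c i * z i)|
      ≤ (∑ i, p i * |a i * x i|) + (∑ i, p i * |b i * y i|) + (∑ i, p i * |c i * z i|) := by
        gcongr <;> exact bnd _
    _ = ∑ i, p i * (|a i * x i| + |b i * y i| + |c i * z i|) := by
        rw [← Finset.sum_add_distrib, ← Finset.sum_add_distrib]
        exact Finset.sum_congr rfl fun i _ => by ring
    _ ≤ ∑ i, p i * 1 := Finset.sum_le_sum fun i _ => mul_le_mul_of_nonneg_left (hcs i) (hp i)
    _ = 1 := by simp [hp1]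
end
end

section
/- The largest squared Schmidt coefficient of the four-qubit state |Φ⟩ = (√SWAP†)_{2,3}(|φ_Bell⟩_{12} ⊗ |φ_Bell⟩_{34}) with respect to the bipartition {1,2}|{3,4} equals 5/8. Equivalently, the largest eigenvalue of the reduced density matrix Tr_{3,4}(|Φ⟩⟨Φ|) is 5/8. -/
open Matrix Complex

noncomputable section

/-- The Bell state `(|01⟩ + |10⟩)/√2`. -/
def bell : Fin 2 × Fin 2 → ℂ :=
  fun p => if p.1 ≠ p.2 then (1 / (Real.sqrt 2 : ℂ)) else 0

/-- `√SWAP†` as a two-qubit matrix (basis order `|00⟩, |10⟩, |01⟩, |11⟩`). -/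
def sqrtSwapDag : Matrix (Fin 2 × Fin 2) (Fin 2 × Fin 2) ℂ :=
  fun p q =>
    (!![1, 0, 0, 0;
        0, (1 - I)/2, (1 + I)/2, 0;
        0, (1 + I)/2, (1 - I)/2, 0;
        0, 0, 0, 1] : Matrix (Fin 4) (Fin 4) ℂ)
      ⟨p.1.val + 2 * p.2.val, by have := p.1.isLt; have := p.2.isLt; omega⟩
      ⟨q.1.val + 2 * q.2.val, by have := q.1.isLt; have := q.2.isLt; omega⟩

/-- Index type for four qubits. -/
abbrev Q4 := Fin 2 × Fin 2 × Fin 2 × Fin 2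

/-- The product of two Bell pairs `|φ_Bell⟩₁₂ ⊗ |φ_Bell⟩₃₄`. -/
def bellPairs : Q4 → ℂ := fun x => bell (x.1, x.2.1) * bell (x.2.2.1, x.2.2.2)

/-- `√SWAP†` acting on qubits 2 and 3 of the four-qubit system. -/
def U23of4 : Matrix Q4 Q4 ℂ := fun x y =>
  (if x.1 = y.1 then 1 else 0) * sqrtSwapDag (x.2.1, x.2.2.1) (y.2.1, y.2.2.1) *
    (if x.2.2.2 = y.2.2.2 then 1 else 0)

/-- The four-qubit state `|Φ⟩ = (√SWAP†)₂₃ (|φ_Bell⟩₁₂ ⊗ |φ_Bell⟩₃₄)`. -/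
def Phi : Q4 → ℂ := U23of4.mulVec bellPairs

/-- The reduced density matrix of `|Φ⟩⟨Φ|` on qubits 1, 2 (partial trace over 3, 4). -/
def rho12 : Matrix (Fin 2 × Fin 2) (Fin 2 × Fin 2) ℂ := fun a b =>
  ∑ c : Fin 2, ∑ d : Fin 2,
    Phi (a.1, a.2, c, d) * starRingEnd ℂ (Phi (b.1, b.2, c, d))

def PhiT : Q4 → ℂ := fun x =>
  match x with
  | (0,0,1,1) => (1+I)/4
  | (0,1,0,1) => (1-I)/4
  | (0,1,1,0) => 1/2
  | (1,0,0,1) => 1/2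
  | (1,0,1,0) => (1-I)/4
  | (1,1,0,0) => (1+I)/4
  | _ => 0

lemma sqrt2_sq : (Real.sqrt 2 : ℂ) * (Real.sqrt 2 : ℂ) = 2 := by
  rw [← Complex.ofReal_mul]; norm_num [Real.mul_self_sqrt]

set_option maxHeartbeats 1000000 in
lemma Phi_eq : Phi = PhiT := by
  funext ⟨a,b,c,d⟩
  fin_cases a <;> fin_cases b <;> fin_cases c <;> fin_cases d <;>
    · simp only [Phi, Matrix.mulVec, dotProduct, Fintype.sum_prod_type,
        Fin.sum_univ_two, U23of4, sqrtSwapDag, bellPairs, bell, PhiT]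
      norm_num
      try ring_nf
      try simp only [pow_two, ← mul_inv, sqrt2_sq]
      try norm_num
      try ring_nf

def R : Matrix (Fin 2 × Fin 2) (Fin 2 × Fin 2) ℂ :=
  fun a b =>
    match a, b with
    | (0,0),(0,0) => 1/8
    | (0,1),(0,1) => 3/8
    | (1,0),(1,0) => 3/8
    | (1,1),(1,1) => 1/8
    | (0,1),(1,0) => 1/4
    | (1,0),(0,1) => 1/4
    | _, _ => 0

set_option maxHeartbeats 1000000 in
lemma rho12_eq : rho12 = R := by
  funext ⟨a,b⟩ ⟨c,d⟩
  fin_cases a <;> fin_cases b <;> fin_cases c <;> fin_cases d <;>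
    · simp only [rho12, Phi_eq, PhiT, Fin.sum_univ_two, R]
      simp only [Fin.zero_eta, Fin.mk_one, map_div₀, map_add, map_sub, _root_.map_one, map_ofNat, Complex.conj_I]
      norm_num [Complex.I_sq]
      try ring_nf
      try norm_num [Complex.I_sq]

/-- The largest squared Schmidt coefficient of `|Φ⟩` across the bipartition
`{1,2} | {3,4}`, i.e. the largest eigenvalue of the reduced density matrix
`ρ₁₂ = Tr₃₄ |Φ⟩⟨Φ|`, equals `5/8`. -/
theorem stmt15 :
    IsGreatest {μ : ℝ | ∃ v : Fin 2 × Fin 2 → ℂ, v ≠ 0 ∧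
      rho12.mulVec v = (μ : ℂ) • v} (5 / 8) := by
  constructor
  · refine ⟨fun a => if a = (0,1) ∨ a = (1,0) then 1 else 0, ?_, ?_⟩
    · intro h
      have := congrFun h ((0 : Fin 2), (1 : Fin 2))
      simp at this
    · rw [rho12_eq]
      funext ⟨a, b⟩
      fin_cases a <;> fin_cases b <;>
        · simp [Matrix.mulVec, dotProduct, Fintype.sum_prod_type, Fin.sum_univ_two, R,
            Prod.ext_iff]
          try norm_num
  · rintro μ ⟨v, hv, heq⟩
    rw [rho12_eq] at heq
    by_contra hle
    push_neg at hle
    have hμ1 : (μ : ℂ) ≠ 1/8 := by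
      intro h
      have : μ = 1/8 := by
        rw [show ((1:ℂ)/8) = ((1/8 : ℝ) : ℂ) by norm_num] at h
        exact_mod_cast h
      linarith
    have hμ5 : (μ : ℂ) ≠ 5/8 := by
      intro h
      have : μ = 5/8 := by
        rw [show ((5:ℂ)/8) = ((5/8 : ℝ) : ℂ) by norm_num] at h
        exact_mod_cast h
      linarith
    have e00 := congrFun heq ((0 : Fin 2), (0 : Fin 2))
    have e01 := congrFun heq ((0 : Fin 2), (1 : Fin 2))
    have e10 := congrFun heq ((1 : Fin 2), (0 : Fin 2))
    have e11 := congrFun heq ((1 : Fin 2), (1 : Fin 2))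
    simp only [Matrix.mulVec, dotProduct, Fintype.sum_prod_type, Fin.sum_univ_two, R,
      Pi.smul_apply, smul_eq_mul] at e00 e01 e10 e11
    have h00 : v (0,0) = 0 := by
      have h : ((1:ℂ)/8 - μ) * v (0,0) = 0 := by linear_combination e00
      rcases mul_eq_zero.mp h with h' | h'
      · exact absurd (sub_eq_zero.mp h').symm hμ1
      · exact h'
    have h11 : v (1,1) = 0 := by
      have h : ((1:ℂ)/8 - μ) * v (1,1) = 0 := by linear_combination e11
      rcases mul_eq_zero.mp h with h' | h'
      · exact absurd (sub_eq_zero.mp h').symm hμ1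
      · exact h'
    have hs : v (0,1) + v (1,0) = 0 := by
      have h : ((5:ℂ)/8 - μ) * (v (0,1) + v (1,0)) = 0 := by
        linear_combination e01 + e10
      rcases mul_eq_zero.mp h with h' | h'
      · exact absurd (sub_eq_zero.mp h').symm hμ5
      · exact h'
    have hd : v (0,1) - v (1,0) = 0 := by
      have h : ((1:ℂ)/8 - μ) * (v (0,1) - v (1,0)) = 0 := by
        linear_combination e01 - e10
      rcases mul_eq_zero.mp h with h' | h'
      · exact absurd (sub_eq_zero.mp h').symm hμ1
      · exact h'
    have h01 : v (0,1) = 0 := by linear_combination (hs + hd) / 2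
    have h10 : v (1,0) = 0 := by linear_combination (hs - hd) / 2
    apply hv
    funext ⟨a, b⟩
    fin_cases a <;> fin_cases b <;> simpa using ‹_›
end
end
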